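/- Define K_{S¹} : ℝ → ℝ by K_{S¹}(θ) = (π/2) sin(2θ) sgn(θ) − (θ/2) sin(2θ) − (1/8) cos(2θ). Then for every integer k, the k-th Fourier coefficient (1/2π) ∫_{−π}^{π} K_{S¹}(θ) e^{ikθ} dθ equals 1/(4 − k²) if |k| ≠ 2, and equals 0 if |k| = 2. -/

import Mathlib

open Real intervalIntegral

noncomputable section

lemma integral_cexp_lin (m : ℂ) (hm : m ≠ 0) (a b : ℝ) :
    ∫ θ in a..b, Complex.exp (Complex.I * m * θ) =
      -Complex.I * (Complex.exp (Complex.I * m * b) - Complex.exp (Complex.I * m * a)) / m := by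
  rw [integral_exp_mul_complex (a := a) (b := b) (c := Complex.I * m)
    (by simp [Complex.I_ne_zero, hm])]
  field_simp
  ring_nf
  simp [Complex.I_sq]
  ring

lemma integral_id_mul_cexp_lin (m : ℂ) (hm : m ≠ 0) (a b : ℝ) :
    ∫ θ in a..b, (θ : ℂ) * Complex.exp (Complex.I * m * θ) =
      -Complex.I * ((b : ℂ) * Complex.exp (Complex.I * m * b)
          - (a : ℂ) * Complex.exp (Complex.I * m * a)) / m
        + (Complex.exp (Complex.I * m * b) - Complex.exp (Complex.I * m * a)) / m ^ 2 := by
  set c : ℂ := Complex.I * m with hc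
  have hc0 : c ≠ 0 := by simp [hc, Complex.I_ne_zero, hm]
  have hd : ∀ θ : ℝ, HasDerivAt
      (fun t : ℝ => (t : ℂ) * Complex.exp (c * t) / c - Complex.exp (c * t) / c ^ 2)
      ((θ : ℂ) * Complex.exp (c * θ)) θ := by
    intro θ
    have h1 : HasDerivAt (fun t : ℝ => (t : ℂ)) 1 θ := Complex.ofRealCLM.hasDerivAt
    have h2 : HasDerivAt (fun t : ℝ => c * (t : ℂ)) c θ := by
      simpa using h1.const_mul c
    have h3 : HasDerivAt (fun t : ℝ => Complex.exp (c * t)) (Complex.exp (c * θ) * c) θ :=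
      h2.cexp
    have h4 := ((h1.mul h3).div_const c).sub (h3.div_const (c ^ 2))
    convert h4 using 1
    · rfl
    · rfl
    · field_simp
      ring
  rw [intervalIntegral.integral_eq_sub_of_hasDerivAt (fun θ _ => hd θ) (Continuous.intervalIntegrable
      (by fun_prop : Continuous fun t : ℝ => (t:ℂ) * Complex.exp (c * t)) a b)]
  have hI : c ^ 2 = -(m ^ 2) := by rw [hc, mul_pow, Complex.I_sq]; ring
  rw [hI]
  field_simp [hc]
  ring_nf
  rw [hc]
  linear_combination (↑b * Complex.exp (↑b * (Complex.I * m)) * m ^ 2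
    - m ^ 2 * ↑a * Complex.exp (Complex.I * m * ↑a)) * Complex.I_sq

lemma key_pointwise (σ : ℝ) (c : ℂ) (θ : ℝ) :
    ((Real.pi/2 * Real.sin (2*θ) * σ - θ/2 * Real.sin (2*θ) - 1/8 * Real.cos (2*θ) : ℝ) : ℂ)
        * Complex.exp (Complex.I * c * θ)
    = (-(σ:ℂ)*Real.pi*Complex.I/4 - 1/16) * Complex.exp (Complex.I * (c+2) * θ)
      + ((σ:ℂ)*Real.pi*Complex.I/4 - 1/16) * Complex.exp (Complex.I * (c-2) * θ)
      + (Complex.I/4) * ((θ:ℂ) * Complex.exp (Complex.I * (c+2) * θ))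
      + (-Complex.I/4) * ((θ:ℂ) * Complex.exp (Complex.I * (c-2) * θ)) := by
  have h1 : Complex.I * (c+2) * θ = Complex.I * c * θ + ((2*θ:ℝ):ℂ) * Complex.I := by
    push_cast; ring
  have h2 : Complex.I * (c-2) * θ = Complex.I * c * θ + (-((2*θ:ℝ):ℂ)) * Complex.I := by
    push_cast; ring
  rw [h1, h2, Complex.exp_add, Complex.exp_add, Complex.exp_mul_I, Complex.exp_mul_I,
    Complex.cos_neg, Complex.sin_neg]
  push_cast
  linear_combination (Complex.exp (Complex.I*c*(θ:ℂ)) * Complex.sin (2*(θ:ℂ))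
      * ((σ:ℂ)*(Real.pi:ℂ) - (θ:ℂ))/2) * Complex.I_sq

lemma integral_g (σ : ℝ) (c : ℂ) (a b : ℝ) :
    (∫ θ in a..b, ((Real.pi/2 * Real.sin (2*θ) * σ - θ/2 * Real.sin (2*θ)
        - 1/8 * Real.cos (2*θ) : ℝ) : ℂ) * Complex.exp (Complex.I * c * θ))
    = (-(σ:ℂ)*Real.pi*Complex.I/4 - 1/16) * (∫ θ in a..b, Complex.exp (Complex.I * (c+2) * θ))
      + ((σ:ℂ)*Real.pi*Complex.I/4 - 1/16) * (∫ θ in a..b, Complex.exp (Complex.I * (c-2) * θ))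
      + (Complex.I/4) * (∫ θ in a..b, (θ:ℂ) * Complex.exp (Complex.I * (c+2) * θ))
      + (-Complex.I/4) * (∫ θ in a..b, (θ:ℂ) * Complex.exp (Complex.I * (c-2) * θ)) := by
  have i1 : ∀ d : ℂ, IntervalIntegrable (fun θ : ℝ => Complex.exp (Complex.I * d * θ))
      MeasureTheory.volume a b := fun d =>
    Continuous.intervalIntegrable (by fun_prop) a b
  have i2 : ∀ d : ℂ, IntervalIntegrable (fun θ : ℝ => (θ:ℂ) * Complex.exp (Complex.I * d * θ))
      MeasureTheory.volume a b := fun d =>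
    Continuous.intervalIntegrable (by fun_prop) a b
  rw [← intervalIntegral.integral_const_mul, ← intervalIntegral.integral_const_mul,
    ← intervalIntegral.integral_const_mul, ← intervalIntegral.integral_const_mul,
    ← intervalIntegral.integral_add ((i1 (c+2)).const_mul _) ((i1 (c-2)).const_mul _),
    ← intervalIntegral.integral_add (((i1 (c+2)).const_mul _).add ((i1 (c-2)).const_mul _))
      ((i2 (c+2)).const_mul _),
    ← intervalIntegral.integral_add ((((i1 (c+2)).const_mul _).add ((i1 (c-2)).const_mul _)).add
      ((i2 (c+2)).const_mul _)) ((i2 (c-2)).const_mul _)]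
  exact intervalIntegral.integral_congr fun θ _ => key_pointwise σ c θ

lemma integral_id_complex (a b : ℝ) : (∫ θ in a..b, (θ:ℂ)) = (((b^2 - a^2)/2 : ℝ) : ℂ) := by
  rw [intervalIntegral.integral_ofReal (f := fun x : ℝ => x), integral_id]

/-- The 1D Biot–Savart kernel
`K_{S¹}(θ) = (π/2) sin(2θ) sgn(θ) − (θ/2) sin(2θ) − (1/8) cos(2θ)`. -/
def KS1 (θ : ℝ) : ℝ :=
  Real.pi / 2 * Real.sin (2 * θ) * Real.sign θ - θ / 2 * Real.sin (2 * θ)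
    - 1 / 8 * Real.cos (2 * θ)

/-- The Fourier coefficients of `K_{S¹}`: the `k`-th coefficient
`(1/2π) ∫_{−π}^{π} K_{S¹}(θ) e^{ikθ} dθ` equals `1/(4 − k²)` for `|k| ≠ 2`
and `0` for `|k| = 2`. -/
theorem KS1_fourierCoeff (k : ℤ) :
    (1 / (2 * Real.pi) : ℂ) *
        ∫ θ in (-Real.pi)..Real.pi, (KS1 θ : ℂ) * Complex.exp (Complex.I * k * θ) =
      if k = 2 ∨ k = -2 then 0 else 1 / (4 - (k : ℂ) ^ 2) := by
  have hπ := Real.pi_pos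
  set f : ℝ → ℂ := fun θ => (KS1 θ : ℂ) * Complex.exp (Complex.I * k * θ) with hf
  have hg : ∀ σ : ℝ, Continuous (fun θ : ℝ =>
      ((Real.pi/2 * Real.sin (2*θ) * σ - θ/2 * Real.sin (2*θ) - 1/8 * Real.cos (2*θ) : ℝ) : ℂ)
        * Complex.exp (Complex.I * k * θ)) := by intro σ; fun_prop
  have hEqp : Set.EqOn f (fun θ : ℝ =>
      ((Real.pi/2 * Real.sin (2*θ) * (1:ℝ) - θ/2 * Real.sin (2*θ) - 1/8 * Real.cos (2*θ) : ℝ) : ℂ)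
        * Complex.exp (Complex.I * k * θ)) (Set.uIcc 0 Real.pi) := by
    intro θ hθ
    rw [Set.uIcc_of_le hπ.le] at hθ
    rcases eq_or_lt_of_le hθ.1 with h | h
    · simp [hf, KS1, ← h]
    · simp [hf, KS1, Real.sign_of_pos h]
  have hEqm : Set.EqOn f (fun θ : ℝ =>
      ((Real.pi/2 * Real.sin (2*θ) * (-1:ℝ) - θ/2 * Real.sin (2*θ) - 1/8 * Real.cos (2*θ) : ℝ) : ℂ)
        * Complex.exp (Complex.I * k * θ)) (Set.uIcc (-Real.pi) 0) := by
    intro θ hθ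
    rw [Set.uIcc_of_le (by linarith)] at hθ
    rcases eq_or_lt_of_le hθ.2 with h | h
    · simp [hf, KS1, h]
    · simp [hf, KS1, Real.sign_of_neg h]
  have hintp : IntervalIntegrable f MeasureTheory.volume 0 Real.pi :=
    ContinuousOn.intervalIntegrable (((hg 1).continuousOn).congr hEqp)
  have hintm : IntervalIntegrable f MeasureTheory.volume (-Real.pi) 0 :=
    ContinuousOn.intervalIntegrable (((hg (-1)).continuousOn).congr hEqm)
  rw [← intervalIntegral.integral_add_adjacent_intervals hintm hintp,
    intervalIntegral.integral_congr hEqm, intervalIntegral.integral_congr hEqp,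
    integral_g, integral_g]
  have hπc : (Real.pi : ℂ) ≠ 0 := Complex.ofReal_ne_zero.mpr (ne_of_gt hπ)
  have z1 : ∀ a b : ℝ, (∫ θ in a..b, Complex.exp (Complex.I * 0 * θ)) = ((b:ℂ) - (a:ℂ)) := by
    intro a b; simp
  have z2 : ∀ a b : ℝ, (∫ θ in a..b, (θ:ℂ) * Complex.exp (Complex.I * 0 * θ))
      = (((b^2 - a^2)/2 : ℝ):ℂ) := by
    intro a b
    simp only [mul_zero, zero_mul, Complex.exp_zero, mul_one]
    exact integral_id_complex a b
  rcases eq_or_ne k 2 with hk2 | hk2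
  · rw [if_pos (Or.inl hk2)]; subst hk2
    have hA : ((2:ℤ):ℂ) + 2 = 4 := by norm_num
    have hB : ((2:ℤ):ℂ) - 2 = 0 := by norm_num
    rw [hA, hB, z1, z1, z2, z2, integral_cexp_lin 4 (by norm_num),
      integral_cexp_lin 4 (by norm_num), integral_id_mul_cexp_lin 4 (by norm_num),
      integral_id_mul_cexp_lin 4 (by norm_num)]
    have E1 : Complex.exp (Complex.I * 4 * ((Real.pi:ℝ):ℂ)) = 1 := by
      rw [show Complex.I * 4 * ((Real.pi:ℝ):ℂ) = ((2:ℤ):ℂ) * (2*Real.pi*Complex.I) by push_cast; ring,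
        Complex.exp_int_mul_two_pi_mul_I]
    have E2 : Complex.exp (Complex.I * 4 * ((-Real.pi:ℝ):ℂ)) = 1 := by
      rw [show Complex.I * 4 * ((-Real.pi:ℝ):ℂ) = ((-2:ℤ):ℂ) * (2*Real.pi*Complex.I) by push_cast; ring,
        Complex.exp_int_mul_two_pi_mul_I]
    rw [E1, E2]
    push_cast
    ring_nf
    simp only [Complex.I_sq, Complex.exp_zero]
    field_simp
    ring
  rcases eq_or_ne k (-2) with hkm2 | hkm2
  · rw [if_pos (Or.inr hkm2)]; subst hkm2
    have hA : ((-2:ℤ):ℂ) + 2 = 0 := by norm_num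
    have hB : ((-2:ℤ):ℂ) - 2 = -4 := by norm_num
    rw [hA, hB, z1, z1, z2, z2, integral_cexp_lin (-4) (by norm_num),
      integral_cexp_lin (-4) (by norm_num), integral_id_mul_cexp_lin (-4) (by norm_num),
      integral_id_mul_cexp_lin (-4) (by norm_num)]
    have E1 : Complex.exp (Complex.I * (-4) * ((Real.pi:ℝ):ℂ)) = 1 := by
      rw [show Complex.I * (-4) * ((Real.pi:ℝ):ℂ) = ((-2:ℤ):ℂ) * (2*Real.pi*Complex.I) by push_cast; ring,
        Complex.exp_int_mul_two_pi_mul_I]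
    have E2 : Complex.exp (Complex.I * (-4) * ((-Real.pi:ℝ):ℂ)) = 1 := by
      rw [show Complex.I * (-4) * ((-Real.pi:ℝ):ℂ) = ((2:ℤ):ℂ) * (2*Real.pi*Complex.I) by push_cast; ring,
        Complex.exp_int_mul_two_pi_mul_I]
    rw [E1, E2]
    push_cast
    ring_nf
    simp only [Complex.I_sq, Complex.exp_zero]
    field_simp
    ring
  rw [if_neg (by tauto)]
  have hm1 : ((k:ℂ) + 2) ≠ 0 := by
    have h := Int.cast_ne_zero (α := ℂ) |>.mpr (show k + 2 ≠ 0 by omega)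
    push_cast at h; exact h
  have hm2 : ((k:ℂ) - 2) ≠ 0 := by
    have h := Int.cast_ne_zero (α := ℂ) |>.mpr (show k - 2 ≠ 0 by omega)
    push_cast at h; exact h
  rw [integral_cexp_lin _ hm1, integral_cexp_lin _ hm2, integral_cexp_lin _ hm1,
    integral_cexp_lin _ hm2, integral_id_mul_cexp_lin _ hm1, integral_id_mul_cexp_lin _ hm2,
    integral_id_mul_cexp_lin _ hm1, integral_id_mul_cexp_lin _ hm2]
  set ω := Complex.exp (Complex.I * (k:ℂ) * (Real.pi:ℝ)) with hω
  have ekey : ∀ (c : ℂ) (n : ℤ) (x : ℝ), Complex.I * c * (x:ℂ)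
        = Complex.I * (k:ℂ) * (Real.pi:ℝ) + (n:ℂ) * (2 * Real.pi * Complex.I) →
      Complex.exp (Complex.I * c * (x:ℂ)) = ω := by
    intro c n x h
    rw [h, Complex.exp_add, Complex.exp_int_mul_two_pi_mul_I, mul_one, hω]
  have e1 : Complex.exp (Complex.I * ((k:ℂ) + 2) * ((Real.pi:ℝ):ℂ)) = ω :=
    ekey _ 1 Real.pi (by push_cast; ring)
  have e2 : Complex.exp (Complex.I * ((k:ℂ) + 2) * ((-Real.pi:ℝ):ℂ)) = ω :=
    ekey _ (-(k+1)) (-Real.pi) (by push_cast; ring)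
  have e3 : Complex.exp (Complex.I * ((k:ℂ) - 2) * ((Real.pi:ℝ):ℂ)) = ω :=
    ekey _ (-1) Real.pi (by push_cast; ring)
  have e4 : Complex.exp (Complex.I * ((k:ℂ) - 2) * ((-Real.pi:ℝ):ℂ)) = ω :=
    ekey _ (-(k-1)) (-Real.pi) (by push_cast; ring)
  rw [e1, e2, e3, e4]
  push_cast
  simp only [mul_zero, Complex.exp_zero]
  have h4 : (4:ℂ) - (k:ℂ)^2 ≠ 0 := by
    intro h
    exact mul_ne_zero hm1 hm2 (by linear_combination -h)
  ring_nf
  simp only [Complex.I_sq]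
  field_simp
  ring_nf
  have d1 : (16:ℂ) + (k:ℂ) * 8 ≠ 0 := fun h => hm1 (by linear_combination h / 8)
  have d2 : (-16:ℂ) + (k:ℂ) * 8 ≠ 0 := fun h => hm2 (by linear_combination h / 8)
  have d3 : (k:ℂ) * (Real.pi:ℂ) * 8 + (Real.pi:ℂ) * 16 ≠ 0 := by
    intro h
    have h' : ((k:ℂ) + 2) * ((Real.pi:ℂ) * 8) = 0 := by linear_combination h
    rcases mul_eq_zero.mp h' with h'' | h''
    · exact hm1 h''
    · exact hπc (by linear_combination h'' / 8)
  have d4 : (k:ℂ) * (Real.pi:ℂ) * 8 - (Real.pi:ℂ) * 16 ≠ 0 := by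
    intro h
    have h' : ((k:ℂ) - 2) * ((Real.pi:ℂ) * 8) = 0 := by linear_combination h
    rcases mul_eq_zero.mp h' with h'' | h''
    · exact hm2 h''
    · exact hπc (by linear_combination h'' / 8)
  have h1 := mul_inv_cancel₀ d1
  have h2 := mul_inv_cancel₀ d2
  have h3 := mul_inv_cancel₀ d3
  have h4' := mul_inv_cancel₀ d4
  have e5 : (2 + (k:ℂ)) ≠ 0 := fun h => hm1 (by linear_combination h)
  have e6 : (-2 + (k:ℂ)) ≠ 0 := fun h => hm2 (by linear_combination h)
  field_simp
  ring
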